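/- For every n ≥ 1, the minimum number of leaves of a ternary decision tree computing the hazard-free extension of MUX_n, denoted size_u(MUX_n), satisfies 2·4^n ≤ size_u(MUX_n) ≤ 4^{n+1} − 3^n. -/

import Mathlib

attribute [local instance 0] Classical.propDecidable

/-- Ternary values: `none` represents the uncertain value `u`,
`some b` represents the Boolean value `b`. -/
abbrev TVal := Option Bool

/-- The resolutions of `x ∈ {0,u,1}^ι`: all Boolean strings agreeing with
the determined coordinates of `x`. -/
def Res {ι : Type} (x : ι → Option Bool) : Set (ι → Bool) :=
  {y | ∀ i b, x i = some b → y i = b}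

/-- The hazard-free extension of a Boolean function `f`. -/
noncomputable def hfext {ι : Type} (f : (ι → Bool) → Bool) (x : ι → Option Bool) :
    Option Bool :=
  if ∀ y ∈ Res x, f y = true then some true
  else if ∀ y ∈ Res x, f y = false then some false
  else none

/-- Number of uncertain (`u`) coordinates of `x`. -/
noncomputable def uCount {ι : Type} [Fintype ι] (x : ι → Option Bool) : ℕ :=
  (Finset.univ.filter fun i : ι => x i = none).card

/-- u-sensitivity of `f` at `x`: the number of coordinates `i` such that
changing only coordinate `i` can change the value of the hazard-free extension. -/
noncomputable def sensAt {ι : Type} [Fintype ι] (f : (ι → Bool) → Bool)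
    (x : ι → Option Bool) : ℕ :=
  (Finset.univ.filter fun i : ι => ∃ y : ι → Option Bool,
      y i ≠ x i ∧ (∀ j, j ≠ i → y j = x j) ∧ hfext f y ≠ hfext f x).card

/-- u-sensitivity of `f`. -/
noncomputable def sensU {ι : Type} [Fintype ι] [DecidableEq ι]
    (f : (ι → Bool) → Bool) : ℕ :=
  Finset.univ.sup fun x : ι → Option Bool => sensAt f x

/-- u-sensitivity of `f` restricted to inputs whose hazard-free value is `b`. -/
noncomputable def sensULevel {ι : Type} [Fintype ι] [DecidableEq ι]
    (f : (ι → Bool) → Bool) (b : Option Bool) : ℕ :=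
  (Finset.univ.filter fun x : ι → Option Bool => hfext f x = b).sup (sensAt f)

/-- Boolean sensitivity of `f` at a Boolean input `x`. -/
noncomputable def boolSensAt {ι : Type} [Fintype ι] [DecidableEq ι]
    (f : (ι → Bool) → Bool) (x : ι → Bool) : ℕ :=
  (Finset.univ.filter fun i : ι => f (Function.update x i (!x i)) ≠ f x).card

/-- Boolean sensitivity of `f`. -/
noncomputable def boolSens {ι : Type} [Fintype ι] [DecidableEq ι]
    (f : (ι → Bool) → Bool) : ℕ :=
  Finset.univ.sup (boolSensAt f)

/-- There are `k` pairwise disjoint blocks, each of which is sensitive for the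
hazard-free extension of `f` at `x`. -/
def HasSensBlocks {ι : Type} (f : (ι → Bool) → Bool) (x : ι → Option Bool)
    (k : ℕ) : Prop :=
  ∃ (B : Fin k → Set ι) (y : Fin k → ι → Option Bool),
    (∀ j j', j ≠ j' → Disjoint (B j) (B j')) ∧
    ∀ j, (∀ i, y j i ≠ x i ↔ i ∈ B j) ∧ hfext f (y j) ≠ hfext f x

/-- u-block sensitivity of `f`. -/
noncomputable def bsU {ι : Type} (f : (ι → Bool) → Bool) : ℕ :=
  sSup {k | ∃ x, HasSensBlocks f x k}

/-- A ternary string `y` is consistent with a partial assignment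
`p : ι → Option (Option Bool)` (`none` = `*`). -/
def Consistent {ι : Type} (y : ι → Option Bool) (p : ι → Option (Option Bool)) :
    Prop :=
  ∀ i v, p i = some v → y i = v

/-- `p` is a certificate for the hazard-free extension of `f` at `x`. -/
def IsCert {ι : Type} (f : (ι → Bool) → Bool) (x : ι → Option Bool)
    (p : ι → Option (Option Bool)) : Prop :=
  Consistent x p ∧ ∀ y, Consistent y p → hfext f y = hfext f x

/-- Size of a partial assignment: the number of non-`*` coordinates. -/
noncomputable def certSize {ι : Type} [Fintype ι] (p : ι → Option (Option Bool)) :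
    ℕ :=
  (Finset.univ.filter fun i : ι => p i ≠ none).card

/-- u-certificate complexity of `f` at `x`. -/
noncomputable def ccAt {ι : Type} [Fintype ι] (f : (ι → Bool) → Bool)
    (x : ι → Option Bool) : ℕ :=
  sInf {k | ∃ p, IsCert f x p ∧ certSize p = k}

/-- u-certificate complexity of `f`. -/
noncomputable def ccU {ι : Type} [Fintype ι] [DecidableEq ι]
    (f : (ι → Bool) → Bool) : ℕ :=
  Finset.univ.sup fun x : ι → Option Bool => ccAt f x

/-- u-certificate complexity of `f` restricted to inputs with hazard-free value `b`. -/
noncomputable def ccULevel {ι : Type} [Fintype ι] [DecidableEq ι]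
    (f : (ι → Bool) → Bool) (b : Option Bool) : ℕ :=
  (Finset.univ.filter fun x : ι → Option Bool => hfext f x = b).sup (ccAt f)

/-- A set of literals (at most one per variable), encoded as a partial Boolean
assignment `q : ι → Option Bool`, is an implicant of `f` if `f` is `true` on
every Boolean input extending `q`. -/
def IsImplicant {ι : Type} (f : (ι → Bool) → Bool) (q : ι → Option Bool) : Prop :=
  ∀ y : ι → Bool, (∀ i b, q i = some b → y i = b) → f y = true

/-- Dually, an implicate of `f` forces the value `false`. -/
def IsImplicate {ι : Type} (f : (ι → Bool) → Bool) (q : ι → Option Bool) : Prop :=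
  ∀ y : ι → Bool, (∀ i b, q i = some b → y i = b) → f y = false

/-- `q'` is a (literal-)subset of `q`. -/
def SubAsn {ι : Type} (q' q : ι → Option Bool) : Prop :=
  ∀ i b, q' i = some b → q i = some b

def IsPrimeImplicant {ι : Type} (f : (ι → Bool) → Bool) (q : ι → Option Bool) :
    Prop :=
  IsImplicant f q ∧ ∀ q', SubAsn q' q → q' ≠ q → ¬ IsImplicant f q'

def IsPrimeImplicate {ι : Type} (f : (ι → Bool) → Bool) (q : ι → Option Bool) :
    Prop :=
  IsImplicate f q ∧ ∀ q', SubAsn q' q → q' ≠ q → ¬ IsImplicate f q'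

/-- Number of literals of a partial assignment. -/
noncomputable def asnSize {ι : Type} [Fintype ι] (q : ι → Option Bool) : ℕ :=
  (Finset.univ.filter fun i : ι => q i ≠ none).card

/-- Ternary decision trees: internal nodes query a variable and branch on the
three possible values `0`, `u`, `1`; leaves output a value in `{0,u,1}`. -/
inductive TTree (ι : Type) : Type where
  | leaf : Option Bool → TTree ι
  | node : ι → TTree ι → TTree ι → TTree ι → TTree ι

namespace TTree

def eval {ι : Type} : TTree ι → (ι → Option Bool) → Option Bool
  | .leaf b, _ => b
  | .node i t0 tu t1, x =>
    match x i with
    | some false => eval t0 x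
    | none => eval tu x
    | some true => eval t1 x

def depth {ι : Type} : TTree ι → ℕ
  | .leaf _ => 0
  | .node _ t0 tu t1 => max (max t0.depth tu.depth) t1.depth + 1

/-- Size of a tree: its number of leaves. -/
def size {ι : Type} : TTree ι → ℕ
  | .leaf _ => 1
  | .node _ t0 tu t1 => t0.size + tu.size + t1.size

end TTree

/-- Boolean decision trees. -/
inductive BTree (ι : Type) : Type where
  | leaf : Bool → BTree ι
  | node : ι → BTree ι → BTree ι → BTree ι

namespace BTree

def eval {ι : Type} : BTree ι → (ι → Bool) → Bool
  | .leaf b, _ => b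
  | .node i t0 t1, x => if x i then eval t1 x else eval t0 x

def depth {ι : Type} : BTree ι → ℕ
  | .leaf _ => 0
  | .node _ t0 t1 => max t0.depth t1.depth + 1

/-- Size of a tree: its number of leaves. -/
def size {ι : Type} : BTree ι → ℕ
  | .leaf _ => 1
  | .node _ t0 t1 => t0.size + t1.size

end BTree

/-- Deterministic u-query complexity: minimal depth of a ternary decision tree
computing the hazard-free extension of `f`. -/
noncomputable def Du {ι : Type} (f : (ι → Bool) → Bool) : ℕ :=
  sInf {d | ∃ T : TTree ι, (∀ x, T.eval x = hfext f x) ∧ T.depth = d}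

/-- Minimal number of leaves of a ternary decision tree computing the
hazard-free extension of `f`. -/
noncomputable def sizeU {ι : Type} (f : (ι → Bool) → Bool) : ℕ :=
  sInf {s | ∃ T : TTree ι, (∀ x, T.eval x = hfext f x) ∧ T.size = s}

/-- Deterministic (Boolean) query complexity of `f`. -/
noncomputable def Dbool {ι : Type} (f : (ι → Bool) → Bool) : ℕ :=
  sInf {d | ∃ T : BTree ι, (∀ x, T.eval x = f x) ∧ T.depth = d}

/-- Minimal number of leaves of a Boolean decision tree computing `f`. -/
noncomputable def sizeBool {ι : Type} (f : (ι → Bool) → Bool) : ℕ :=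
  sInf {s | ∃ T : BTree ι, (∀ x, T.eval x = f x) ∧ T.size = s}

/-- Index type for `MUX_n`: `n` selector bits and `2^n` data bits. -/
abbrev MUXIdx (n : ℕ) := Fin n ⊕ (Fin n → Bool)

/-- The multiplexer function: output the data bit addressed by the selector bits. -/
def MUX (n : ℕ) (z : MUXIdx n → Bool) : Bool :=
  z (Sum.inr fun i => z (Sum.inl i))

namespace HF

/-- restricted resolution predicate on selector strings -/
def wRes {σ : Type} (s : σ → Option Bool) (r : σ → Bool) : Prop :=
  ∀ i bit, s i = some bit → r i = bit

lemma optNone (o : Option Bool) (h1 : o ≠ some true) (h2 : o ≠ some false) : o = none := by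
  rcases o with _ | b
  · rfl
  · cases b <;> simp_all

lemma mux_forall_iff (n : ℕ) (x : MUXIdx n → Option Bool) (v : Bool) :
    (∀ y ∈ Res x, MUX n y = v) ↔
      (∀ r, wRes (fun i => x (Sum.inl i)) r → x (Sum.inr r) = some v) := by
  constructor
  · intro h r hr
    have mk : ∀ c : Bool,
        (Sum.elim r (fun w => if w = r then c else (x (Sum.inr w)).getD false)) ∈ Res x →
        c = v := by
      intro c hc
      have := h _ hc
      simpa [MUX] using this
    rcases hx : x (Sum.inr r) with _ | c
    · exfalso
      have hmem : ∀ c : Bool,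
          (Sum.elim r (fun w => if w = r then c else (x (Sum.inr w)).getD false)) ∈ Res x := by
        intro c idx b hb
        rcases idx with i | w
        · simpa using hr i b hb
        · simp only [Sum.elim_inr]
          by_cases hw : w = r
          · subst hw; rw [hb] at hx; cases hx
          · simp [hw, hb]
      have ht := mk true (hmem true)
      have hf := mk false (hmem false)
      simp [← ht] at hf
    · have hmem : (Sum.elim r (fun w => if w = r then c else (x (Sum.inr w)).getD false)) ∈ Res x := by
        intro idx b hb
        rcases idx with i | w
        · simpa using hr i b hb
        · simp only [Sum.elim_inr]
          by_cases hw : w = r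
          · subst hw; rw [hb] at hx; simpa using hx.symm
          · simp [hw, hb]
      rw [mk c hmem]
  · intro h y hy
    have hr : wRes (fun i => x (Sum.inl i)) (fun i => y (Sum.inl i)) := by
      intro i bit hb
      exact hy (Sum.inl i) bit hb
    have := h _ hr
    have := hy (Sum.inr (fun i => y (Sum.inl i))) v this
    simpa [MUX] using this

lemma res_nonempty {ι : Type} (x : ι → Option Bool) : (fun i => (x i).getD false) ∈ Res x := by
  intro i b hb; simp [hb]

lemma hfext_eq_some_iff (n : ℕ) (x : MUXIdx n → Option Bool) (v : Bool) :
    hfext (MUX n) x = some v ↔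
      (∀ r, wRes (fun i => x (Sum.inl i)) r → x (Sum.inr r) = some v) := by
  rw [← mux_forall_iff]
  unfold hfext
  by_cases h1 : ∀ y ∈ Res x, MUX n y = true
  · rw [if_pos h1]
    cases v
    · constructor
      · intro h; cases h
      · intro h; exact absurd (h _ (res_nonempty x)) (by simp [h1 _ (res_nonempty x)])
    · exact ⟨fun _ => h1, fun _ => rfl⟩
  · rw [if_neg h1]
    by_cases h0 : ∀ y ∈ Res x, MUX n y = false
    · rw [if_pos h0]
      cases v
      · exact ⟨fun _ => h0, fun _ => rfl⟩
      · constructor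
        · intro h; cases h
        · intro h; exact absurd (h _ (res_nonempty x)) (by simp [h0 _ (res_nonempty x)])
    · rw [if_neg h0]
      cases v
      · exact ⟨fun h => (by cases h), fun h => absurd h h0⟩
      · exact ⟨fun h => (by cases h), fun h => absurd h h1⟩


lemma tsize_pos {ι : Type} (t : TTree ι) : 1 ≤ t.size := by
  induction t with
  | leaf b => simp [TTree.size]
  | node i t0 tu t1 ih0 ihu ih1 => simp [TTree.size]; omega

def relabel {ι ι' : Type} (g : ι → ι') : TTree ι → TTree ι'
  | .leaf b => .leaf b
  | .node i t0 tu t1 => .node (g i) (relabel g t0) (relabel g tu) (relabel g t1)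

lemma eval_relabel {ι ι' : Type} (g : ι → ι') (t : TTree ι) (x : ι' → Option Bool) :
    (relabel g t).eval x = t.eval (x ∘ g) := by
  induction t with
  | leaf b => rfl
  | node i t0 tu t1 ih0 ihu ih1 =>
      simp only [relabel, TTree.eval]
      rcases h : x (g i) with _ | b
      · simpa [Function.comp, h] using ihu
      · cases b
        · simpa [Function.comp, h] using ih0
        · simpa [Function.comp, h] using ih1

lemma size_relabel {ι ι' : Type} (g : ι → ι') (t : TTree ι) :
    (relabel g t).size = t.size := by
  induction t with
  | leaf b => rfl
  | node i t0 tu t1 ih0 ihu ih1 => simp [relabel, TTree.size, ih0, ihu, ih1]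

def chk {ι : Type} (v : Bool) : List ι → TTree ι
  | [] => .leaf (some v)
  | i :: L => .node i (bif v then .leaf none else chk v L) (.leaf none)
      (bif v then chk v L else .leaf none)

lemma chk_size {ι : Type} (v : Bool) (L : List ι) : (chk v L).size = 2 * L.length + 1 := by
  induction L with
  | nil => rfl
  | cons i L ih => cases v <;> simp [chk, TTree.size, ih] <;> omega

lemma chk_eval {ι : Type} (v : Bool) (L : List ι) (x : ι → Option Bool) :
    (chk v L).eval x = if (∀ i ∈ L, x i = some v) then some v else none := by
  induction L with
  | nil => simp [chk, TTree.eval]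
  | cons i L ih =>
    rcases h : x i with _ | b
    · cases v <;> simp [chk, TTree.eval, h] <;> exact fun hh => absurd (hh i (by simp)) (by simp [h])
    · cases v <;> cases b <;>
        simp [chk, TTree.eval, h, ih] <;>
        try (exact fun hh => absurd (hh i (by simp)) (by simp [h]))

def allV {n : ℕ} {β : Type} (v : Bool) (x : (Fin n ⊕ β × (Fin n → Bool)) → Option Bool) : Prop :=
  ∀ (j : β) (r : Fin n → Bool), wRes (fun i => x (Sum.inl i)) r → x (Sum.inr (j, r)) = some v

noncomputable def Fval {n : ℕ} {β : Type} (x : (Fin n ⊕ β × (Fin n → Bool)) → Option Bool) :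
    Option Bool :=
  if allV true x then some true else if allV false x then some false else none

lemma Fval_congr {n m : ℕ} {β γ : Type} (x : (Fin n ⊕ β × (Fin n → Bool)) → Option Bool)
    (y : (Fin m ⊕ γ × (Fin m → Bool)) → Option Bool)
    (h : ∀ v, allV v x ↔ allV v y) : Fval x = Fval y := by
  unfold Fval
  rw [if_congr (h true) rfl rfl, if_congr (h false) rfl rfl]

def gS {n : ℕ} {β : Type} (c : Bool) :
    (Fin n ⊕ β × (Fin n → Bool)) → (Fin (n+1) ⊕ β × (Fin (n+1) → Bool)) :=
  Sum.elim (fun i => Sum.inl i.succ) (fun p => Sum.inr (p.1, Fin.cons c p.2))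

def gU {n : ℕ} {β : Type} :
    (Fin n ⊕ (Bool × β) × (Fin n → Bool)) → (Fin (n+1) ⊕ β × (Fin (n+1) → Bool)) :=
  Sum.elim (fun i => Sum.inl i.succ) (fun p => Sum.inr (p.1.2, Fin.cons p.1.1 p.2))

lemma allV_comp_some {n : ℕ} {β : Type}
    (x : (Fin (n+1) ⊕ β × (Fin (n+1) → Bool)) → Option Bool) (c : Bool)
    (h : x (Sum.inl 0) = some c) (v : Bool) :
    allV v (x ∘ gS c) ↔ allV v x := by
  constructor
  · intro H j r hr
    have hr0 : r 0 = c := hr 0 c h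
    have := H j (fun i => r i.succ) (fun i bit hb => hr i.succ bit hb)
    have hre : Fin.cons c (fun i => r i.succ) = r := by
      rw [← hr0]; exact Fin.cons_self_tail r
    simpa [gS, hre] using this
  · intro H j r' hr'
    have hw : wRes (fun i => x (Sum.inl i)) (Fin.cons c r') := by
      intro i
      refine Fin.cases (motive := fun i => ∀ bit, x (Sum.inl i) = some bit →
        Fin.cons (α := fun _ => Bool) c r' i = bit) ?_ ?_ i
      · intro bit hb; rw [h] at hb; cases hb; simp
      · intro k bit hb
        have := hr' k bit hb
        simpa using this
    have := H j (Fin.cons c r') hw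
    simpa [gS] using this

lemma allV_comp_none {n : ℕ} {β : Type}
    (x : (Fin (n+1) ⊕ β × (Fin (n+1) → Bool)) → Option Bool)
    (h : x (Sum.inl 0) = none) (v : Bool) :
    allV v (x ∘ gU) ↔ allV v x := by
  constructor
  · intro H j r hr
    have := H (r 0, j) (fun i => r i.succ) (fun i bit hb => hr i.succ bit hb)
    have hre : Fin.cons (r 0) (fun i => r i.succ) = r := Fin.cons_self_tail r
    simpa [gU, hre] using this
  · rintro H ⟨c, j⟩ r' hr'
    have hw : wRes (fun i => x (Sum.inl i)) (Fin.cons c r') := by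
      intro i
      refine Fin.cases (motive := fun i => ∀ bit, x (Sum.inl i) = some bit →
        Fin.cons (α := fun _ => Bool) c r' i = bit) ?_ ?_ i
      · intro bit hb; rw [h] at hb; cases hb
      · intro k bit hb
        have := hr' k bit hb
        simpa using this
    have := H j (Fin.cons c r') hw
    simpa [gU] using this

lemma exists_Fval_tree (n : ℕ) : ∀ (β : Type) (l : List β), l ≠ [] → (∀ j : β, j ∈ l) →
    ∃ T : TTree (Fin n ⊕ β × (Fin n → Bool)),
      (∀ x, T.eval x = Fval x) ∧ T.size + 3^n ≤ 4 * l.length * 4^n := by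
  induction n with
  | zero =>
    intro β l hne hcompl
    match l, hne with
    | j0 :: rest, _ =>
      set r₀ : Fin 0 → Bool := fun i => i.elim0 with hr₀
      set L : List (Fin 0 ⊕ β × (Fin 0 → Bool)) := rest.map fun j => Sum.inr (j, r₀) with hL
      refine ⟨.node (Sum.inr (j0, r₀)) (chk false L) (.leaf none) (chk true L), ?_, ?_⟩
      · intro x
        have hA : ∀ v : Bool, allV v x ↔ ∀ j : β, x (Sum.inr (j, r₀)) = some v := by
          intro v
          constructor
          · intro h j; exact h j r₀ (fun i _ _ => i.elim0)
          · intro h j r hr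
            rw [show r = r₀ from funext fun i => i.elim0]
            exact h j
        have hrw : ∀ (v : Bool), (∀ i ∈ L, x i = some v) ↔
            (∀ j ∈ rest, x (Sum.inr (j, r₀)) = some v) := by
          intro v
          constructor
          · intro h j hj; exact h _ (List.mem_map_of_mem hj)
          · intro h i hi
            obtain ⟨j, hj, rfl⟩ := List.mem_map.mp hi
            exact h j hj
        have keyT : ∀ b : Bool, x (Sum.inr (j0, r₀)) = some b →
            (∀ i ∈ L, x i = some b) → some b = Fval x := by
          intro b h0 hall
          · have hall' := (hrw b).mp hall
            have hb : allV b x := by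
              rw [hA]
              intro j
              rcases List.mem_cons.mp (hcompl j) with rfl | hj
              · exact h0
              · exact hall' j hj
            have hnb : ¬ allV (!b) x := by
              rw [hA]
              intro h
              have := h j0
              rw [h0] at this
              cases b <;> simp at this
            cases b
            · simp only [Bool.not_false] at hnb
              simp [Fval, hb, hnb]
            · simp [Fval, hb]
        have keyF : ∀ b : Bool, x (Sum.inr (j0, r₀)) = some b →
            (¬ ∀ i ∈ L, x i = some b) → (none : Option Bool) = Fval x := by
          intro b h0 hall
          · have hb : ¬ allV b x := by
              rw [hA]
              intro h
              exact hall ((hrw b).mpr (fun j hj => h j))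
            have hnb : ¬ allV (!b) x := by
              rw [hA]; intro h; have := h j0; rw [h0] at this
              cases b <;> simp at this
            cases b
            · simp only [Bool.not_false] at hnb
              simp [Fval, hb, hnb]
            · simp only [Bool.not_true] at hnb
              simp [Fval, hb, hnb]
        rcases h0 : x (Sum.inr (j0, r₀)) with _ | b
        · have hT : ¬ allV true x := by
            rw [hA]; intro h; have := h j0; rw [h0] at this; cases this
          have hF : ¬ allV false x := by
            rw [hA]; intro h; have := h j0; rw [h0] at this; cases this
          have : TTree.eval (.node (Sum.inr (j0, r₀)) (chk false L) (.leaf none) (chk true L)) x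
              = TTree.eval (TTree.leaf none) x := by
            simp only [TTree.eval, h0]
          rw [this]
          simp [Fval, hT, hF, TTree.eval]
        · cases b
          · have : TTree.eval (.node (Sum.inr (j0, r₀)) (chk false L) (.leaf none) (chk true L)) x
                = TTree.eval (chk false L) x := by
              simp only [TTree.eval, h0]
            rw [this, chk_eval]
            rcases Classical.em (∀ i ∈ L, x i = some false) with hall | hall
            · rw [if_pos hall]; exact keyT false h0 hall
            · rw [if_neg hall]; exact keyF false h0 hall
          · have : TTree.eval (.node (Sum.inr (j0, r₀)) (chk false L) (.leaf none) (chk true L)) x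
                = TTree.eval (chk true L) x := by
              simp only [TTree.eval, h0]
            rw [this, chk_eval]
            rcases Classical.em (∀ i ∈ L, x i = some true) with hall | hall
            · rw [if_pos hall]; exact keyT true h0 hall
            · rw [if_neg hall]; exact keyF true h0 hall
      · simp [TTree.size, chk_size, hL, List.length_map, List.length_cons]
        omega
  | succ n IH =>
    intro β l hne hcompl
    obtain ⟨T0, h0, s0⟩ := IH β l hne hcompl
    have hne' : (l.map (fun j => ((true : Bool), j)) ++ l.map (fun j => ((false : Bool), j))) ≠ [] := by
      simp [hne]
    have hcompl' : ∀ p : Bool × β,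
        p ∈ l.map (fun j => ((true : Bool), j)) ++ l.map (fun j => ((false : Bool), j)) := by
      rintro ⟨c, j⟩
      cases c
      · exact List.mem_append_right _ (List.mem_map_of_mem (hcompl j))
      · exact List.mem_append_left _ (List.mem_map_of_mem (hcompl j))
    obtain ⟨Tu, hu, su⟩ := IH (Bool × β) _ hne' hcompl'
    refine ⟨.node (Sum.inl 0) (relabel (gS false) T0) (relabel gU Tu) (relabel (gS true) T0),
      ?_, ?_⟩
    · intro x
      rcases h : x (Sum.inl 0) with _ | b
      · have : TTree.eval (.node (Sum.inl 0) (relabel (gS false) T0) (relabel gU Tu)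
            (relabel (gS true) T0)) x = TTree.eval (relabel gU Tu) x := by
          simp only [TTree.eval, h]
        rw [this, eval_relabel, hu]
        exact Fval_congr _ _ (allV_comp_none x h)
      · cases b
        · have : TTree.eval (.node (Sum.inl 0) (relabel (gS false) T0) (relabel gU Tu)
              (relabel (gS true) T0)) x = TTree.eval (relabel (gS false) T0) x := by
            simp only [TTree.eval, h]
          rw [this, eval_relabel, h0]
          exact Fval_congr _ _ (allV_comp_some x false h)
        · have : TTree.eval (.node (Sum.inl 0) (relabel (gS false) T0) (relabel gU Tu)
              (relabel (gS true) T0)) x = TTree.eval (relabel (gS true) T0) x := by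
            simp only [TTree.eval, h]
          rw [this, eval_relabel, h0]
          exact Fval_congr _ _ (allV_comp_some x true h)
    · have hlen : (l.map (fun j => ((true : Bool), j)) ++ l.map (fun j => ((false : Bool), j))).length
          = 2 * l.length := by simp; omega
      rw [hlen] at su
      simp only [TTree.size, size_relabel]
      have e1 : 4 * (2 * l.length) * 4^n = 8 * (l.length * 4^n) := by ring
      have e2 : 4 * l.length * 4^n = 4 * (l.length * 4^n) := by ring
      have e3 : 4 * l.length * 4^(n+1) = 16 * (l.length * 4^n) := by rw [pow_succ]; ring
      have e4 : (3:ℕ)^(n+1) = 3 * 3^n := by rw [pow_succ]; ring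
      rw [e1] at su
      rw [e2] at s0
      rw [e3, e4]
      omega

def GG (n : ℕ) : (Fin n ⊕ Unit × (Fin n → Bool)) → MUXIdx n :=
  Sum.elim Sum.inl (fun p => Sum.inr p.2)

lemma hfext_eq_Fval (n : ℕ) (x : MUXIdx n → Option Bool) :
    hfext (MUX n) x = Fval (x ∘ GG n) := by
  have h : ∀ v, (∀ y ∈ Res x, MUX n y = v) ↔ allV v (x ∘ GG n) := by
    intro v; rw [mux_forall_iff]
    constructor
    · intro h j r hr; exact h r hr
    · intro h r hr; exact h () r hr
  unfold hfext Fval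
  rcases Classical.em (∀ y ∈ Res x, MUX n y = true) with h1 | h1
  · rw [if_pos h1, if_pos ((h true).mp h1)]
  · rw [if_neg h1, if_neg (fun c => h1 ((h true).mpr c))]
    rcases Classical.em (∀ y ∈ Res x, MUX n y = false) with h0 | h0
    · rw [if_pos h0, if_pos ((h false).mp h0)]
    · rw [if_neg h0, if_neg (fun c => h0 ((h false).mpr c))]

lemma upper_tree (n : ℕ) : ∃ T : TTree (MUXIdx n),
    (∀ x, T.eval x = hfext (MUX n) x) ∧ T.size + 3^n ≤ 4 * 4^n := by
  obtain ⟨T, hT, hs⟩ := exists_Fval_tree n Unit [()] (by simp) (fun j => by simp)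
  refine ⟨relabel (GG n) T, ?_, ?_⟩
  · intro x; rw [eval_relabel, hT, hfext_eq_Fval]
  · rw [size_relabel]
    simpa using hs

lemma fooling {ι : Type} (f : (ι → Bool) → Bool) :
    ∀ (T : TTree ι) (p : ι → Option (Option Bool)) (S : Finset (ι → Option Bool)),
      (∀ y, Consistent y p → T.eval y = hfext f y) →
      (∀ x ∈ S, Consistent x p) →
      (∀ x ∈ S, ∀ x' ∈ S, x ≠ x' →
        ∃ y : ι → Option Bool, (∀ i, x i = x' i → y i = x i) ∧ hfext f y ≠ hfext f x) →
      S.card ≤ T.size := by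
  intro T
  induction T with
  | leaf c =>
    intro p S hT hS hfool
    have : S.card ≤ 1 := by
      refine Finset.card_le_one.mpr ?_
      intro x hx x' hx'
      by_contra hne
      obtain ⟨y, hagree, hy⟩ := hfool x hx x' hx' hne
      have hyc : Consistent y p := by
        intro i v hp
        have h1 : x i = v := hS x hx i v hp
        have h2 : x' i = v := hS x' hx' i v hp
        rw [hagree i (by rw [h1, h2]), h1]
      have e1 : hfext f y = c := (hT y hyc).symm
      have e2 : hfext f x = c := (hT x (hS x hx)).symm
      rw [e1, e2] at hy
      exact hy rfl
    simpa [TTree.size] using this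
  | node i t0 tu t1 ih0 ihu ih1 =>
    intro p S hT hS hfool
    have key : ∀ (v : Option Bool) (t : TTree ι),
        (∀ y : ι → Option Bool, y i = v →
          TTree.eval (TTree.node i t0 tu t1) y = t.eval y) →
        (∀ (p' : ι → Option (Option Bool)) (S' : Finset (ι → Option Bool)),
          (∀ y, Consistent y p' → t.eval y = hfext f y) →
          (∀ x ∈ S', Consistent x p') →
          (∀ x ∈ S', ∀ x' ∈ S', x ≠ x' →
            ∃ y : ι → Option Bool, (∀ j, x j = x' j → y j = x j) ∧ hfext f y ≠ hfext f x) →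
          S'.card ≤ t.size) →
        ∀ S' : Finset (ι → Option Bool), S' ⊆ S → (∀ x ∈ S', x i = v) →
        S'.card ≤ t.size := by
      intro v t hmatch iht S' hsub hval
      rcases S'.eq_empty_or_nonempty with rfl | ⟨x₀, hx₀⟩
      · simpa using tsize_pos t
      · set p' : ι → Option (Option Bool) := fun j => if j = i then some v else p j with hp'
        have hpi : ∀ w, p i = some w → w = v := by
          intro w hw
          have := hS x₀ (hsub hx₀) i w hw
          rw [hval x₀ hx₀] at this
          exact this.symm
        refine iht p' S' ?_ ?_ ?_
        · intro y hy
          have hyi : y i = v := hy i v (by simp [hp'])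
          have hyp : Consistent y p := by
            intro j w hw
            by_cases hj : j = i
            · subst hj
              rw [hyi, hpi w hw]
            · exact hy j w (by simp [hp', hj, hw])
          rw [← hT y hyp]
          exact (hmatch y hyi).symm
        · intro x hx j w hw
          by_cases hj : j = i
          · subst hj
            simp only [hp', if_pos rfl] at hw
            rw [hval x hx]
            exact (Option.some.inj hw).symm ▸ rfl
          · simp only [hp', if_neg hj] at hw
            exact hS x (hsub hx) j w hw
        · intro x hx x' hx' hne
          exact hfool x (hsub hx) x' (hsub hx') hne
    have hsplit :
        S.card ≤ (S.filter (fun x => x i = some false)).card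
          + (S.filter (fun x => x i = none)).card
          + (S.filter (fun x => x i = some true)).card := by
      have hcov : S ⊆ (S.filter (fun x => x i = some false))
          ∪ (S.filter (fun x => x i = none))
          ∪ (S.filter (fun x => x i = some true)) := by
        intro x hx
        rcases h : x i with _ | b
        · simp [Finset.mem_union, Finset.mem_filter, hx, h]
        · cases b <;> simp [Finset.mem_union, Finset.mem_filter, hx, h]
      calc S.card ≤ ((S.filter (fun x => x i = some false))
          ∪ (S.filter (fun x => x i = none))
          ∪ (S.filter (fun x => x i = some true))).card := Finset.card_le_card hcov
        _ ≤ _ :=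
          le_trans (Finset.card_union_le _ _)
            (Nat.add_le_add_right (Finset.card_union_le _ _) _)
    have b0 : (S.filter (fun x => x i = some false)).card ≤ t0.size := by
      refine key (some false) t0 ?_ ih0 _ (Finset.filter_subset _ _) ?_
      · intro y hy; simp only [TTree.eval, hy]
      · intro x hx; exact (Finset.mem_filter.mp hx).2
    have bu : (S.filter (fun x => x i = none)).card ≤ tu.size := by
      refine key none tu ?_ ihu _ (Finset.filter_subset _ _) ?_
      · intro y hy; simp only [TTree.eval, hy]
      · intro x hx; exact (Finset.mem_filter.mp hx).2
    have b1 : (S.filter (fun x => x i = some true)).card ≤ t1.size := by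
      refine key (some true) t1 ?_ ih1 _ (Finset.filter_subset _ _) ?_
      · intro y hy; simp only [TTree.eval, hy]
      · intro x hx; exact (Finset.mem_filter.mp hx).2
    simp only [TTree.size]
    exact le_trans hsplit (Nat.add_le_add (Nat.add_le_add b0 bu) b1)

noncomputable def phi {n : ℕ} (s : Fin n → Option Bool) (a : Fin n → Bool) (b : Bool) :
    MUXIdx n → Option Bool
  | Sum.inl i => s i
  | Sum.inr w => if wRes s w then (if w = a then (if b then none else some true) else some b)
      else some false

lemma phi_inr {n : ℕ} (s : Fin n → Option Bool) (a : Fin n → Bool) (b : Bool)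
    (w : Fin n → Bool) : phi s a b (Sum.inr w) =
      if wRes s w then (if w = a then (if b then none else some true) else some b)
      else some false := rfl

lemma phi_val_mem {n : ℕ} {s : Fin n → Option Bool} {a w : Fin n → Bool} {b : Bool}
    (hw : wRes s w) (hwa : w ≠ a) : phi s a b (Sum.inr w) = some b := by
  rw [phi_inr, if_pos hw, if_neg hwa]

lemma phi_val_a {n : ℕ} {s : Fin n → Option Bool} {a : Fin n → Bool} {b : Bool}
    (ha : wRes s a) : phi s a b (Sum.inr a) = (if b then none else some true) := by
  rw [phi_inr, if_pos ha, if_pos rfl]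

lemma phi_val_a_true {n : ℕ} {s : Fin n → Option Bool} {a : Fin n → Bool}
    (ha : wRes s a) : phi s a true (Sum.inr a) = none := by
  rw [phi_val_a ha]; simp

lemma phi_val_a_false {n : ℕ} {s : Fin n → Option Bool} {a : Fin n → Bool}
    (ha : wRes s a) : phi s a false (Sum.inr a) = some true := by
  rw [phi_val_a ha]; simp

lemma phi_val_nmem {n : ℕ} {s : Fin n → Option Bool} {a w : Fin n → Bool} {b : Bool}
    (hw : ¬ wRes s w) : phi s a b (Sum.inr w) = some false := by
  rw [phi_inr, if_neg hw]

lemma phi_false_ne_none {n : ℕ} {s : Fin n → Option Bool} {a w : Fin n → Bool} :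
    phi s a false (Sum.inr w) ≠ none := by
  rw [phi_inr]
  rcases Classical.em (wRes s w) with h | h
  · rw [if_pos h]
    rcases Classical.em (w = a) with h' | h' <;> simp [h']
  · rw [if_neg h]; simp

lemma phi_false_eq_true {n : ℕ} {s : Fin n → Option Bool} {a w : Fin n → Bool}
    (h : phi s a false (Sum.inr w) = some true) : w = a := by
  rw [phi_inr] at h
  rcases Classical.em (wRes s w) with h1 | h1
  · rw [if_pos h1] at h
    rcases Classical.em (w = a) with h' | h'
    · exact h'
    · rw [if_neg h'] at h; cases h
  · rw [if_neg h1] at h; cases h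

lemma hfext_phi_true {n : ℕ} {s : Fin n → Option Bool} {a : Fin n → Bool}
    (hs : wRes s a) : hfext (MUX n) (phi s a true) = none := by
  apply optNone
  · intro h
    rw [hfext_eq_some_iff] at h
    have := h a hs
    rw [phi_val_a_true hs] at this
    cases this
  · intro h
    rw [hfext_eq_some_iff] at h
    have := h a hs
    rw [phi_val_a_true hs] at this
    cases this

lemma hfext_phi_ne_false {n : ℕ} {s : Fin n → Option Bool} {a : Fin n → Bool} {b : Bool}
    (hs : wRes s a) : hfext (MUX n) (phi s a b) ≠ some false := by
  intro h
  rw [hfext_eq_some_iff] at h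
  have := h a hs
  rw [phi_val_a hs] at this
  cases b <;> simp at this

lemma hfext_phi_false_two {n : ℕ} {s : Fin n → Option Bool} {a w : Fin n → Bool}
    (hs : wRes s a) (hw : wRes s w) (hwa : w ≠ a) :
    hfext (MUX n) (phi s a false) = none := by
  apply optNone
  · intro h
    rw [hfext_eq_some_iff] at h
    have := h w hw
    rw [phi_val_mem hw hwa] at this
    cases this
  · exact hfext_phi_ne_false hs

noncomputable def wit {n : ℕ} (p : Fin n → Option Bool) (v : Bool) (x x'' : MUXIdx n → Option Bool) :
    MUXIdx n → Option Bool
  | Sum.inl i => p i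
  | Sum.inr w => if x (Sum.inr w) = x'' (Sum.inr w) then x (Sum.inr w) else some v

lemma hfext_wit {n : ℕ} (p : Fin n → Option Bool) (v : Bool) (x x'' : MUXIdx n → Option Bool)
    (hkey : ∀ r, wRes p r → x (Sum.inr r) = x'' (Sum.inr r) → x (Sum.inr r) = some v) :
    hfext (MUX n) (wit p v x x'') = some v := by
  rw [hfext_eq_some_iff]
  intro r hr
  show (if x (Sum.inr r) = x'' (Sum.inr r) then x (Sum.inr r) else some v) = some v
  rcases Classical.em (x (Sum.inr r) = x'' (Sum.inr r)) with h | h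
  · rw [if_pos h]; exact hkey r hr h
  · rw [if_neg h]


lemma phi_fool {n : ℕ} (s t : Fin n → Option Bool) (a a' : Fin n → Bool) (b c : Bool)
    (hs : wRes s a) (ht : wRes t a') (hne : (s, a, b) ≠ (t, a', c)) :
    ∃ y : MUXIdx n → Option Bool,
      (∀ idx, phi s a b idx = phi t a' c idx → y idx = phi s a b idx) ∧
      hfext (MUX n) y ≠ hfext (MUX n) (phi s a b) := by
  have mk : ∀ (p : Fin n → Option Bool) (v : Bool),
      (∀ i, s i = t i → p i = s i) →
      (∀ r, wRes p r → phi s a b (Sum.inr r) = phi t a' c (Sum.inr r) →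
        phi s a b (Sum.inr r) = some v) →
      hfext (MUX n) (phi s a b) ≠ some v →
      ∃ y : MUXIdx n → Option Bool,
        (∀ idx, phi s a b idx = phi t a' c idx → y idx = phi s a b idx) ∧
        hfext (MUX n) y ≠ hfext (MUX n) (phi s a b) := by
    intro p v hpa hkey hval
    refine ⟨wit p v (phi s a b) (phi t a' c), ?_, ?_⟩
    · intro idx h
      rcases idx with i | w
      · exact hpa i h
      · show (if phi s a b (Sum.inr w) = phi t a' c (Sum.inr w) then phi s a b (Sum.inr w)
          else some v) = phi s a b (Sum.inr w)
        rw [if_pos h]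
    · rw [hfext_wit p v _ _ hkey]
      exact fun h => hval h.symm
  have routeS : ∀ (i0 : Fin n), s i0 ≠ t i0 → s i0 = none →
      (∀ r, wRes s r → r ≠ a → phi s a b (Sum.inr r) = phi t a' c (Sum.inr r) →
        phi s a b (Sum.inr r) = some b) →
      hfext (MUX n) (phi s a b) ≠ some b →
      ∃ y : MUXIdx n → Option Bool,
        (∀ idx, phi s a b idx = phi t a' c idx → y idx = phi s a b idx) ∧
        hfext (MUX n) y ≠ hfext (MUX n) (phi s a b) := by
    intro i0 hi0 h0 hgen hval
    refine mk (fun j => if j = i0 then some (!(a i0)) else s j) b ?_ ?_ hval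
    · intro i hi
      rcases Classical.em (i = i0) with rfl | hii
      · exact absurd hi hi0
      · simp only [if_neg hii]
    · intro r hr heq
      have hrs : wRes s r := by
        intro i bit hb
        rcases Classical.em (i = i0) with rfl | hii
        · rw [h0] at hb; cases hb
        · exact hr i bit (by simp only [if_neg hii]; exact hb)
      have hra : r ≠ a := by
        intro h
        have := hr i0 (!(a i0)) (by simp)
        rw [h] at this
        simp at this
      exact hgen r hrs hra heq
  have routeT : ∀ (i0 : Fin n), s i0 ≠ t i0 → t i0 = none →
      (∀ r, wRes t r → r ≠ a → phi s a b (Sum.inr r) = phi t a' c (Sum.inr r) →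
        phi s a b (Sum.inr r) = some b) →
      hfext (MUX n) (phi s a b) ≠ some b →
      ∃ y : MUXIdx n → Option Bool,
        (∀ idx, phi s a b idx = phi t a' c idx → y idx = phi s a b idx) ∧
        hfext (MUX n) y ≠ hfext (MUX n) (phi s a b) := by
    intro i0 hi0 h0 hgen hval
    refine mk (fun j => if j = i0 then some (!(a i0)) else t j) b ?_ ?_ hval
    · intro i hi
      rcases Classical.em (i = i0) with rfl | hii
      · exact absurd hi hi0
      · simp only [if_neg hii, hi]
    · intro r hr heq
      have hrt : wRes t r := by
        intro i bit hb
        rcases Classical.em (i = i0) with rfl | hii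
        · rw [h0] at hb; cases hb
        · exact hr i bit (by simp only [if_neg hii]; exact hb)
      have hra : r ≠ a := by
        intro h
        have := hr i0 (!(a i0)) (by simp)
        rw [h] at this
        simp at this
      exact hgen r hrt hra heq
  have honeLem : ∀ (i0 : Fin n), s i0 ≠ t i0 → wRes t a → s i0 = none ∨ t i0 = none := by
    intro i0 hi0 hta
    rcases h1 : s i0 with _ | bs
    · exact Or.inl rfl
    · rcases h2 : t i0 with _ | bt
      · exact Or.inr rfl
      · exfalso
        have e1 := hs i0 bs h1
        have e2 := hta i0 bt h2
        rw [h1, h2, ← e1, ← e2] at hi0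
        exact hi0 rfl
  cases b
  · cases c
    · -- b = false, c = false
      by_cases haa : a = a'
      · -- case 3
        subst haa
        have hst : s ≠ t := by
          intro h; exact hne (by rw [h])
        obtain ⟨i0, hi0⟩ := Function.ne_iff.mp hst
        rcases honeLem i0 hi0 ht with h0 | h0
        · exact routeS i0 hi0 h0 (fun r hrs hra _ => phi_val_mem hrs hra)
            (hfext_phi_ne_false hs)
        · refine routeT i0 hi0 h0 (fun r hrt hra heq => ?_) (hfext_phi_ne_false hs)
          rw [heq]
          exact phi_val_mem hrt hra
      · -- case 2 : b = c = false, a ≠ a'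
        refine mk s false (fun i _ => rfl) ?_ (hfext_phi_ne_false hs)
        intro r hr heq
        rcases Classical.em (r = a) with rfl | hra
        · exfalso
          rw [phi_val_a_false hs] at heq
          rw [phi_inr] at heq
          rcases Classical.em (wRes t r) with h1 | h1
          · rw [if_pos h1, if_neg haa] at heq; cases heq
          · rw [if_neg h1] at heq; cases heq
        · exact phi_val_mem hr hra
    · -- b = false, c = true
      rcases Classical.em (wRes t a ∧ a ≠ a') with ⟨hta, haa⟩ | hnc
      · by_cases hst : s = t
        · -- case 5
          subst hst
          refine mk s true (fun i _ => rfl) ?_ ?_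
          · intro r hr heq
            rcases Classical.em (r = a) with rfl | hra
            · exact phi_val_a_false hs
            · rcases Classical.em (r = a') with rfl | hra'
              · exfalso
                rw [phi_val_a_true ht] at heq
                exact phi_false_ne_none heq
              · rw [heq]
                exact phi_val_mem hr hra'
          · rw [hfext_phi_false_two hs ht (Ne.symm haa)]
            simp
        · -- case 6
          obtain ⟨i0, hi0⟩ := Function.ne_iff.mp hst
          rcases honeLem i0 hi0 hta with h0 | h0
          · exact routeS i0 hi0 h0 (fun r hrs hra _ => phi_val_mem hrs hra)
              (hfext_phi_ne_false hs)
          · refine routeT i0 hi0 h0 (fun r hrt hra heq => ?_) (hfext_phi_ne_false hs)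
            exfalso
            rcases Classical.em (r = a') with rfl | hra'
            · rw [phi_val_a_true ht] at heq
              exact phi_false_ne_none heq
            · have hx : phi s a false (Sum.inr r) = some true := by
                rw [heq]
                exact phi_val_mem hrt hra'
              exact hra (phi_false_eq_true hx)
      · -- case 4
        refine mk s false (fun i _ => rfl) ?_ (hfext_phi_ne_false hs)
        intro r hr heq
        rcases Classical.em (r = a) with rfl | hra
        · exfalso
          rw [phi_val_a_false hs] at heq
          rw [phi_inr] at heq
          rcases Classical.em (wRes t r) with h1 | h1
          · have haa : r = a' := by
              by_contra hxx
              exact hnc ⟨h1, hxx⟩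
            rw [if_pos h1, if_pos haa] at heq
            simp at heq
          · rw [if_neg h1] at heq; cases heq
        · exact phi_val_mem hr hra
  · cases c
    · -- case 1 : b = true, c = false
      refine mk s true (fun i _ => rfl) ?_ ?_
      · intro r hr heq
        rcases Classical.em (r = a) with rfl | hra
        · exfalso
          rw [phi_val_a_true hs] at heq
          exact phi_false_ne_none heq.symm
        · exact phi_val_mem hr hra
      · rw [hfext_phi_true hs]; simp
    · -- b = c = true
      by_cases haa : a = a'
      · -- case 3 with b = true
        subst haa
        have hst : s ≠ t := by
          intro h; exact hne (by rw [h])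
        obtain ⟨i0, hi0⟩ := Function.ne_iff.mp hst
        rcases honeLem i0 hi0 ht with h0 | h0
        · exact routeS i0 hi0 h0 (fun r hrs hra _ => phi_val_mem hrs hra)
            (by rw [hfext_phi_true hs]; simp)
        · refine routeT i0 hi0 h0 (fun r hrt hra heq => ?_)
            (by rw [hfext_phi_true hs]; simp)
          rw [heq]
          exact phi_val_mem hrt hra
      · -- case 2 with b = c = true, a ≠ a'
        refine mk s true (fun i _ => rfl) ?_ (by rw [hfext_phi_true hs]; simp)
        intro r hr heq
        rcases Classical.em (r = a) with rfl | hra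
        · exfalso
          rw [phi_val_a_true hs] at heq
          rw [phi_inr] at heq
          rcases Classical.em (wRes t r) with h1 | h1
          · rw [if_pos h1, if_neg haa] at heq; cases heq
          · rw [if_neg h1] at heq; cases heq
        · exact phi_val_mem hr hra

lemma phi_injOn {n : ℕ} {s t : Fin n → Option Bool} {a a' : Fin n → Bool} {b c : Bool}
    (hs : wRes s a) (ht : wRes t a') (h : phi s a b = phi t a' c) :
    (s, a, b) = (t, a', c) := by
  have hst : s = t := funext fun i => congrFun h (Sum.inl i)
  subst hst
  by_cases haa : a = a'
  · subst haa
    have E1 := congrFun h (Sum.inr a)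
    rw [phi_val_a hs, phi_val_a ht] at E1
    cases b <;> cases c <;> simp_all
  · exfalso
    have E1 := congrFun h (Sum.inr a)
    rw [phi_val_a hs, phi_val_mem hs haa] at E1
    cases b
    · simp at E1
      subst E1
      have E2 := congrFun h (Sum.inr a')
      rw [phi_val_mem ht (Ne.symm haa), phi_val_a_true ht] at E2
      cases E2
    · cases E1

noncomputable def DSet (n : ℕ) : Finset ((Fin n → Option Bool) × (Fin n → Bool) × Bool) :=
  Finset.univ.filter (fun q => wRes q.1 q.2.1)

lemma card_DSet (n : ℕ) : (DSet n).card = 2 * 4^n := by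
  have : (DSet n).card = (Finset.univ : Finset ((Fin n → Bool × Bool) × Bool)).card := by
    refine Finset.card_nbij'
      (fun q => (fun i => (q.2.1 i, (q.1 i).isNone), q.2.2))
      (fun g => (fun i => if (g.1 i).2 then none else some (g.1 i).1, fun i => (g.1 i).1, g.2))
      (fun q hq => Finset.mem_univ _) ?_ ?_ ?_
    · intro g hg
      simp only [DSet, Finset.mem_coe, Finset.mem_filter, Finset.mem_univ, true_and]
      intro i bit hb
      rcases hgi : (g.1 i).2 with _ | _
      · simp [hgi] at hb
        exact hb
      · simp [hgi] at hb
    · intro q hq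
      have hw : wRes q.1 q.2.1 := (Finset.mem_filter.mp hq).2
      refine Prod.ext ?_ rfl
      funext k
      simp only
      rcases hk : q.1 k with _ | bb
      · simp
      · simp only [Option.isNone_some, if_neg Bool.false_ne_true]
        rw [hw k bb hk]
    · intro g hg
      refine Prod.ext ?_ rfl
      funext k
      simp only
      rcases hk : (g.1 k).2 with _ | _
      · simp only [hk, if_neg Bool.false_ne_true, Option.isNone_some]
        exact Prod.ext rfl hk.symm
      · simp only [hk, if_pos rfl, Option.isNone_none]
        exact Prod.ext rfl hk.symm
  rw [this, Finset.card_univ]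
  simp only [Fintype.card_prod, Fintype.card_fun, Fintype.card_bool, Fintype.card_fin]
  norm_num
  rw [show (4 : ℕ) = 2 * 2 from rfl]
  ring

lemma lower_bound {n : ℕ} (T : TTree (MUXIdx n)) (hT : ∀ x, T.eval x = hfext (MUX n) x) :
    2 * 4^n ≤ T.size := by
  classical
  set S : Finset (MUXIdx n → Option Bool) :=
    (DSet n).image (fun q => phi q.1 q.2.1 q.2.2) with hS
  have hcard : S.card = 2 * 4^n := by
    rw [hS, Finset.card_image_of_injOn, card_DSet]
    intro q hq q' hq' h
    have hs : wRes q.1 q.2.1 := (Finset.mem_filter.mp hq).2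
    have ht : wRes q'.1 q'.2.1 := (Finset.mem_filter.mp hq').2
    have := phi_injOn hs ht h
    calc q = (q.1, q.2.1, q.2.2) := rfl
      _ = (q'.1, q'.2.1, q'.2.2) := this
      _ = q' := rfl
  have hfool := fooling (MUX n) T (fun _ => none) S
    (fun y _ => hT y)
    (fun x _ i v hp => by cases hp)
    ?_
  · rw [hcard] at hfool; exact hfool
  · intro x hx x' hx' hxx
    obtain ⟨q, hq, rfl⟩ := Finset.mem_image.mp hx
    obtain ⟨q', hq', rfl⟩ := Finset.mem_image.mp hx'
    have hs : wRes q.1 q.2.1 := (Finset.mem_filter.mp hq).2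
    have ht : wRes q'.1 q'.2.1 := (Finset.mem_filter.mp hq').2
    have hqq : (q.1, q.2.1, q.2.2) ≠ (q'.1, q'.2.1, q'.2.2) := by
      intro e
      exact hxx (by rw [show q = q' from e])
    exact phi_fool q.1 q'.1 q.2.1 q'.2.1 q.2.2 q'.2.2 hs ht hqq

end HF
open HF in
/-- `2·4^n ≤ size_u(MUX_n) ≤ 4^{n+1} − 3^n`. -/
theorem stmt12 (n : ℕ) (hn : 1 ≤ n) :
    2 * 4^n ≤ sizeU (MUX n) ∧ sizeU (MUX n) ≤ 4^(n+1) - 3^n := by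
  obtain ⟨T, hT, hs⟩ := upper_tree n
  have hmem : T.size ∈ {s | ∃ T' : TTree (MUXIdx n), (∀ x, T'.eval x = hfext (MUX n) x) ∧
      T'.size = s} := ⟨T, hT, rfl⟩
  constructor
  · have hmem2 := Nat.sInf_mem ⟨T.size, hmem⟩
    obtain ⟨T', hT', hsz⟩ := hmem2
    rw [sizeU, ← hsz]
    exact lower_bound T' hT'
  · have h1 : sizeU (MUX n) ≤ T.size := Nat.sInf_le hmem
    have h2 : T.size ≤ 4^(n+1) - 3^n := by
      have : (4:ℕ)^(n+1) = 4 * 4^n := by rw [pow_succ]; ring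
      omega
    exact le_trans h1 h2
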